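/- Let N = 2K-1 and let Π be the N×N cyclic permutation matrix with Π_{i,j} = 1 exactly when (i,j) ∈ {(1,2),(2,3),...,(N-1,N),(N,1)}. For an N×K matrix B, let G = [B, Π B] (N×2K) and let G̃ be the N×N matrix obtained by dropping the last column of G. Then there exists an assignment of the entries of B making det(G̃) ≠ 0; consequently, if the entries of B are i.i.d. from a continuous distribution, det(G̃) ≠ 0 with probability 1. -/

import Mathlib

open MeasureTheory ProbabilityTheory Matrix

/-- The `(2K-1) × (2K-1)` matrix `G̃` obtained from `G = [B, Π B]` (with `Π` the cyclic
permutation sending row `i` to row `i+1`) by dropping the last column. Its `(i,j)` entry is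
`B i j` for `j < K` and `B (i+1) (j-K)` otherwise. -/
noncomputable def Gtilde {K : ℕ} (hK : 1 ≤ K) (B : Matrix (Fin (2 * K - 1)) (Fin K) ℝ) :
    Matrix (Fin (2 * K - 1)) (Fin (2 * K - 1)) ℝ :=
  Matrix.of fun i j =>
    if h : (j : ℕ) < K then B i ⟨j, h⟩
    else B (finRotate (2 * K - 1) i) ⟨(j : ℕ) - K, by have := j.isLt; omega⟩

lemma val_finRotate {n : ℕ} (hn : 0 < n) (i : Fin n) :
    ((finRotate n i : Fin n) : ℕ) = if (i : ℕ) + 1 = n then 0 else (i : ℕ) + 1 := by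
  cases n with
  | zero => omega
  | succ m =>
    rw [coe_finRotate]
    have : i = Fin.last m ↔ (i : ℕ) + 1 = m + 1 := by
      rw [Fin.ext_iff, Fin.val_last]; omega
    split_ifs with h1 h2 h2 <;> first | rfl | omega | (exact absurd (this.1 h1) h2) |
      (exact absurd (this.2 h2) h1)

def fsig (K j : ℕ) : ℕ :=
  if j < K - 1 then 2 * j + 2 else if j = K - 1 then 0 else 2 * (j - K) + 1

lemma fsig_lt {K : ℕ} (hK : 1 ≤ K) {j : ℕ} (hj : j < 2 * K - 1) : fsig K j < 2 * K - 1 := by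
  unfold fsig; split_ifs <;> omega

noncomputable def sigPerm {K : ℕ} (hK : 1 ≤ K) : Equiv.Perm (Fin (2 * K - 1)) :=
  Equiv.ofBijective (fun j => ⟨fsig K (j : ℕ), fsig_lt hK j.isLt⟩)
    (Finite.injective_iff_bijective.1 (by
      intro a b hab
      have h : fsig K (a : ℕ) = fsig K (b : ℕ) := congrArg Fin.val hab
      have ha := a.isLt; have hb := b.isLt
      clear hab
      ext
      unfold fsig at h; split_ifs at h <;> omega))

noncomputable def B0 (K : ℕ) : Matrix (Fin (2 * K - 1)) (Fin K) ℝ :=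
  Matrix.of fun r c =>
    if ((r : ℕ) = 0 ∧ (c : ℕ) = K - 1) ∨ (2 ≤ (r : ℕ) ∧ (r : ℕ) = 2 * (c : ℕ) + 2) then 1 else 0

lemma gtilde_B0 {K : ℕ} (hK : 1 ≤ K) :
    Gtilde hK (B0 K) = ((sigPerm hK)⁻¹).permMatrix ℝ := by
  ext i j
  have hi := i.isLt; have hj := j.isLt
  have hs : ∀ j : Fin (2 * K - 1), ((sigPerm hK) j : ℕ) = fsig K (j : ℕ) := fun j => rfl
  have hcond : ((sigPerm hK)⁻¹ i = j) ↔ ((i : ℕ) = fsig K (j : ℕ)) := by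
    rw [Equiv.Perm.inv_def, Equiv.symm_apply_eq, Fin.ext_iff, hs j]
  have hperm : ((sigPerm hK)⁻¹).permMatrix ℝ i j = if (i : ℕ) = fsig K (j : ℕ) then 1 else 0 := by
    rw [Equiv.Perm.permMatrix, PEquiv.toMatrix_apply, Equiv.toPEquiv_apply]
    simp only [Option.mem_def, Option.some_inj]
    by_cases hc : (i : ℕ) = fsig K (j : ℕ)
    · rw [if_pos (hcond.2 hc), if_pos hc]
    · rw [if_neg (fun h => hc (hcond.1 h)), if_neg hc]
  rw [hperm]
  rw [Gtilde]
  simp only [Matrix.of_apply]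
  have hrot : ((finRotate (2 * K - 1)) i : ℕ) =
      if (i : ℕ) + 1 = 2 * K - 1 then 0 else (i : ℕ) + 1 := val_finRotate (by omega) i
  by_cases h : (j : ℕ) < K
  · rw [dif_pos h]
    rw [B0]
    simp only [Matrix.of_apply]
    unfold fsig
    split_ifs <;> first | rfl | omega
  · rw [dif_neg h]
    rw [B0]
    simp only [Matrix.of_apply]
    unfold fsig
    revert hrot
    split_ifs <;> (intro hrot; first | rfl | omega)

theorem part1 {K : ℕ} (hK : 1 ≤ K) : (Gtilde hK (B0 K)).det ≠ 0 := by
  rw [gtilde_B0 hK, Equiv.Perm.permMatrix, Matrix.det_permutation]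
  rcases Int.units_eq_one_or (Equiv.Perm.sign ((sigPerm hK)⁻¹)) with h | h <;> simp [h]
-- zero set of a nonzero multivariate polynomial is null for products of μ ≪ volume
lemma mvpoly_null_fin (μ : Measure ℝ) [IsProbabilityMeasure μ] (hμ : μ ≪ volume) :
    ∀ (n : ℕ) (p : MvPolynomial (Fin n) ℝ), p ≠ 0 →
      Measure.pi (fun _ : Fin n => μ) {x | MvPolynomial.eval x p = 0} = 0 := by
  intro n
  induction n with
  | zero =>
    intro p hp
    obtain ⟨a, rfl⟩ := MvPolynomial.C_surjective (Fin 0) p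
    have ha : a ≠ 0 := fun h => hp (by rw [h, map_zero])
    have : {x : Fin 0 → ℝ | MvPolynomial.eval x (MvPolynomial.C a) = 0} = ∅ := by
      ext x; simp [ha]
    rw [this]; simp
  | succ n ih =>
    intro p hp
    set ν := Measure.pi (fun _ : Fin n => μ) with hν
    set q : Polynomial (MvPolynomial (Fin n) ℝ) := MvPolynomial.finSuccEquiv ℝ n p with hqdef
    have hq0 : q ≠ 0 := by
      simp only [hqdef, ne_eq, EmbeddingLike.map_eq_zero_iff]
      exact hp
    have hlc : q.leadingCoeff ≠ 0 := Polynomial.leadingCoeff_ne_zero.mpr hq0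
    have hmeasS : MeasurableSet {x : Fin (n+1) → ℝ | MvPolynomial.eval x p = 0} := by
      have : {x : Fin (n+1) → ℝ | MvPolynomial.eval x p = 0}
          = (fun x => MvPolynomial.eval x p) ⁻¹' {0} := rfl
      rw [this]
      exact (MvPolynomial.continuous_eval p).measurable (measurableSet_singleton 0)
    -- decompose the measure at coordinate 0
    have hmp := measurePreserving_piFinSuccAbove (fun _ : Fin (n+1) => μ) 0
    set e := MeasurableEquiv.piFinSuccAbove (fun _ : Fin (n+1) => ℝ) 0 with he
    have key : Measure.pi (fun _ : Fin (n+1) => μ) {x | MvPolynomial.eval x p = 0}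
        = (μ.prod ν) (e.symm ⁻¹' {x | MvPolynomial.eval x p = 0}) :=
      ((hmp.symm e).measure_preimage hmeasS.nullMeasurableSet).symm
    rw [key]
    have hA : (e.symm ⁻¹' {x | MvPolynomial.eval x p = 0})
        = {ys : ℝ × (Fin n → ℝ) |
            Polynomial.eval ys.1 (q.map (MvPolynomial.eval ys.2)) = 0} := by
      ext ⟨y, s⟩
      simp only [Set.mem_preimage, Set.mem_setOf_eq]
      have : e.symm (y, s) = Fin.cons y s := by
        show (Fin.insertNthEquiv (fun _ => ℝ) 0).symm.symm (y, s) = Fin.cons y s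
        rw [Equiv.symm_symm]
        exact Fin.insertNth_zero' y s
      rw [this, MvPolynomial.eval_eq_eval_mv_eval']
    rw [hA]
    -- swap coordinates and apply Fubini
    set A : Set (ℝ × (Fin n → ℝ)) :=
      {ys | Polynomial.eval ys.1 (q.map (MvPolynomial.eval ys.2)) = 0} with hAdef
    set Bs : Set ((Fin n → ℝ) × ℝ) :=
      {sy | Polynomial.eval sy.2 (q.map (MvPolynomial.eval sy.1)) = 0} with hBdef
    have hABswap : Prod.swap ⁻¹' Bs = A := by
      ext ⟨y, s⟩; simp [hAdef, hBdef]
    have hmeasA : MeasurableSet A := by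
      have : A = e.symm ⁻¹' {x | MvPolynomial.eval x p = 0} := hA.symm
      rw [this]; exact e.symm.measurable hmeasS
    have hmeasB : MeasurableSet Bs := by
      have : Bs = Prod.swap ⁻¹' A := by rw [← hABswap]; simp [Set.preimage_preimage]
      rw [this]; exact measurable_swap hmeasA
    have hswap : (μ.prod ν) A = (ν.prod μ) Bs := by
      have h1 : (ν.prod μ) Bs = (Measure.map Prod.swap (μ.prod ν)) Bs := by
        rw [Measure.prod_swap]
      rw [h1, Measure.map_apply measurable_swap hmeasB, hABswap]
    rw [hswap, Measure.measure_prod_null hmeasB]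
    -- a.e. s, the slice is null
    have hZ : ν {s : Fin n → ℝ | MvPolynomial.eval s q.leadingCoeff = 0} = 0 := ih _ hlc
    refine ((ae_iff).2 ?_)
    refine measure_mono_null (fun s hs => ?_) hZ
    simp only [Set.mem_setOf_eq] at hs ⊢
    by_contra hse
    apply hs
    -- if leadingCoeff doesn't vanish at s, q.map (eval s) ≠ 0, so the slice is finite, hence null
    have hqs : q.map (MvPolynomial.eval s) ≠ 0 := fun h => by
      have := congrArg (fun r => Polynomial.coeff r q.natDegree) h
      simp only [Polynomial.coeff_map, Polynomial.coeff_zero] at this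
      exact hse this
    have hfin : Set.Finite {y : ℝ | Polynomial.eval y (q.map (MvPolynomial.eval s)) = 0} :=
      Polynomial.finite_setOf_isRoot hqs
    have : μ (Prod.mk s ⁻¹' Bs) = 0 := by
      have hsub : Prod.mk s ⁻¹' Bs ⊆ {y | Polynomial.eval y (q.map (MvPolynomial.eval s)) = 0} := by
        intro y hy; exact hy
      exact measure_mono_null hsub (hμ (hfin.measure_zero volume))
    exact this

lemma mvpoly_null {ι : Type} [Fintype ι] (μ : Measure ℝ) [IsProbabilityMeasure μ]
    (hμ : μ ≪ volume) (p : MvPolynomial ι ℝ) (hp : p ≠ 0) :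
    Measure.pi (fun _ : ι => μ) {x | MvPolynomial.eval x p = 0} = 0 := by
  classical
  set e : Fin (Fintype.card ι) ≃ ι := (Fintype.equivFin ι).symm with he
  have hmapeq := Measure.pi_map_piCongrLeft e (fun _ : ι => μ)
  set E := MeasurableEquiv.piCongrLeft (fun _ : ι => ℝ) e with hE
  have hmeasS : MeasurableSet {x : ι → ℝ | MvPolynomial.eval x p = 0} := by
    have : {x : ι → ℝ | MvPolynomial.eval x p = 0}
        = (fun x => MvPolynomial.eval x p) ⁻¹' {0} := rfl
    rw [this]
    exact (MvPolynomial.continuous_eval p).measurable (measurableSet_singleton 0)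
  rw [← hmapeq, Measure.map_apply E.measurable hmeasS]
  have hpre : E ⁻¹' {x | MvPolynomial.eval x p = 0}
      = {x : Fin (Fintype.card ι) → ℝ |
          MvPolynomial.eval x (MvPolynomial.rename e.symm p) = 0} := by
    ext x
    simp only [Set.mem_preimage, Set.mem_setOf_eq, MvPolynomial.eval_rename]
    have : (E x : ι → ℝ) = x ∘ e.symm := by
      funext i
      have h2 := MeasurableEquiv.piCongrLeft_apply_apply (β := fun _ : ι => ℝ) e x (e.symm i)
      rw [Equiv.apply_symm_apply] at h2
      exact h2
    rw [this]
  rw [hpre]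
  exact mvpoly_null_fin μ hμ _ _ (fun h => hp
    ((MvPolynomial.rename_injective _ e.symm.injective) (by rw [h, map_zero])))

lemma joint_law {ι : Type} [Fintype ι] {Ω : Type} [MeasurableSpace Ω]
    (P : Measure Ω) [IsProbabilityMeasure P] (f : ι → Ω → ℝ)
    (hmeas : ∀ i, Measurable (f i))
    (hindep : iIndepFun f P)
    (μ : Measure ℝ) [IsProbabilityMeasure μ]
    (hmarg : ∀ i, P.map (f i) = μ) :
    P.map (fun ω i => f i ω) = Measure.pi (fun _ : ι => μ) := by
  classical
  have hFmeas : Measurable (fun ω (i : ι) => f i ω) :=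
    measurable_pi_lambda _ (fun i => hmeas i)
  refine ((Measure.pi_eq fun s hs => ?_)).symm
  rw [Measure.map_apply hFmeas (MeasurableSet.univ_pi hs)]
  have hpre : (fun ω (i : ι) => f i ω) ⁻¹' Set.pi Set.univ s
      = ⋂ i ∈ Finset.univ, f i ⁻¹' s i := by
    ext ω; simp [Set.mem_pi]
  rw [hpre, hindep.measure_inter_preimage_eq_mul Finset.univ (fun i _ => hs i)]
  refine Finset.prod_congr rfl fun i _ => ?_
  rw [← hmarg i, Measure.map_apply (hmeas i) (hs i)]

noncomputable def Pdet {K : ℕ} (hK : 1 ≤ K) :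
    MvPolynomial (Fin (2 * K - 1) × Fin K) ℝ :=
  (Matrix.of fun i j : Fin (2 * K - 1) =>
    if h : (j : ℕ) < K then MvPolynomial.X (i, ⟨j, h⟩)
    else MvPolynomial.X (finRotate (2 * K - 1) i,
      ⟨(j : ℕ) - K, by have := j.isLt; omega⟩)).det

lemma eval_Pdet {K : ℕ} (hK : 1 ≤ K) (b : Fin (2 * K - 1) × Fin K → ℝ) :
    MvPolynomial.eval b (Pdet hK) = (Gtilde hK (Matrix.of fun i j => b (i, j))).det := by
  rw [Pdet, RingHom.map_det]
  rw [RingHom.mapMatrix_apply]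
  congr 1
  ext i j
  rw [Matrix.map_apply, Matrix.of_apply, Gtilde, Matrix.of_apply]
  by_cases h : (j : ℕ) < K
  · rw [dif_pos h, dif_pos h, MvPolynomial.eval_X, Matrix.of_apply]
  · rw [dif_neg h, dif_neg h, MvPolynomial.eval_X, Matrix.of_apply]

/-- For `N = 2K - 1` and the cyclic permutation `Π`, there is an assignment of the entries
of `B` making `det G̃ ≠ 0`, where `G̃` is `[B, Π B]` with the last column dropped;
consequently, if the entries of `B` are i.i.d. from a continuous distribution, then
`det G̃ ≠ 0` with probability 1. -/
theorem stmt18 {K : ℕ} (hK : 1 ≤ K) :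
    (∃ B : Matrix (Fin (2 * K - 1)) (Fin K) ℝ, (Gtilde hK B).det ≠ 0) ∧
    (∀ (Ω : Type) (_ : MeasurableSpace Ω) (P : Measure Ω), IsProbabilityMeasure P →
      ∀ B : Ω → Matrix (Fin (2 * K - 1)) (Fin K) ℝ,
      (∀ i j, Measurable fun ω => B ω i j) →
      iIndepFun
        (fun (q : Fin (2 * K - 1) × Fin K) ω => B ω q.1 q.2) P →
      ∀ μ : Measure ℝ, IsProbabilityMeasure μ → μ ≪ volume →
      (∀ i j, P.map (fun ω => B ω i j) = μ) →
      ∀ᵐ ω ∂P, (Gtilde hK (B ω)).det ≠ 0) := by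
  refine ⟨⟨B0 K, part1 hK⟩, ?_⟩
  intro Ω _ P hP B hmeas hindep μ hμprob hμac hmarg
  haveI := hP; haveI := hμprob
  have hPdet0 : Pdet hK ≠ 0 := by
    intro h
    have h2 := eval_Pdet hK (fun q => B0 K q.1 q.2)
    rw [h, map_zero] at h2
    have hB : (Matrix.of fun i j => (fun q : Fin (2 * K - 1) × Fin K => B0 K q.1 q.2) (i, j))
        = B0 K := rfl
    rw [hB] at h2
    exact part1 hK h2.symm
  have hFmeas : Measurable (fun ω (q : Fin (2 * K - 1) × Fin K) => B ω q.1 q.2) :=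
    measurable_pi_lambda _ (fun q => hmeas q.1 q.2)
  have hmapeq := joint_law P (fun (q : Fin (2 * K - 1) × Fin K) ω => B ω q.1 q.2) (fun q => hmeas q.1 q.2) hindep μ
    (fun q => hmarg q.1 q.2)
  have hmeasset : MeasurableSet
      {x : Fin (2 * K - 1) × Fin K → ℝ | MvPolynomial.eval x (Pdet hK) = 0} := by
    have : {x : Fin (2 * K - 1) × Fin K → ℝ | MvPolynomial.eval x (Pdet hK) = 0}
        = (fun x => MvPolynomial.eval x (Pdet hK)) ⁻¹' {0} := rfl
    rw [this]
    exact (MvPolynomial.continuous_eval (Pdet hK)).measurable (measurableSet_singleton 0)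
  rw [ae_iff]
  have hset : {ω | ¬ (Gtilde hK (B ω)).det ≠ 0}
      = (fun ω (q : Fin (2 * K - 1) × Fin K) => B ω q.1 q.2) ⁻¹'
        {x | MvPolynomial.eval x (Pdet hK) = 0} := by
    ext ω
    simp only [Set.mem_setOf_eq, not_not, Set.mem_preimage]
    rw [eval_Pdet hK (fun q => B ω q.1 q.2)]
    have hB : (Matrix.of fun i j => (fun q : Fin (2 * K - 1) × Fin K => B ω q.1 q.2) (i, j))
        = B ω := rfl
    rw [hB]
  rw [hset, ← Measure.map_apply hFmeas hmeasset, hmapeq]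
  exact mvpoly_null μ hμac _ hPdet0
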